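/- Let X_{γ*} ∈ ℝ^{M×ℓ*} with X_{γ*}ᵀX_{γ*} invertible, and suppose y = X_{γ*}μ* + ε where μ* ∈ ℝ^{ℓ*} satisfies 𝟙ᵀμ* = 1. Then b_{γ*} := (1 − 𝟙ᵀμ̂_{γ*})²/(𝟙ᵀ(X_{γ*}ᵀX_{γ*})⁻¹𝟙) satisfies b_{γ*} ≤ εᵀH_{γ*}ε, where μ̂_{γ*} = (X_{γ*}ᵀX_{γ*})⁻¹X_{γ*}ᵀy and H_{γ*} = X_{γ*}(X_{γ*}ᵀX_{γ*})⁻¹X_{γ*}ᵀ. In particular, if εᵀH_{γ*}ε ≤ σ²ℓ* log N, then b_{γ*} ≤ σ²ℓ* log N. -/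
import Mathlib


open Matrix BigOperators

noncomputable section

private lemma dot_shift {n m : ℕ} (S : Matrix (Fin n) (Fin m) ℝ) (u : Fin n → ℝ)
    (x : Fin m → ℝ) : u ⬝ᵥ (S *ᵥ x) = (Sᵀ *ᵥ u) ⬝ᵥ x := by
  rw [dotProduct_mulVec, mulVec_transpose]

private lemma cs_dot {n : ℕ} (w z : Fin n → ℝ) :
    (w ⬝ᵥ z) ^ 2 ≤ (w ⬝ᵥ w) * (z ⬝ᵥ z) := by
  have := Finset.sum_mul_sq_le_sq_mul_sq Finset.univ w z
  simpa [dotProduct, sq] using this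

/-- Lemma S5: if `y = X_{γ*}μ* + ε` with `𝟙ᵀμ* = 1`, then
`b_{γ*} = (1 − 𝟙ᵀμ̂_{γ*})²/(𝟙ᵀ(X_{γ*}ᵀX_{γ*})⁻¹𝟙) ≤ εᵀH_{γ*}ε`; in particular, if
`εᵀH_{γ*}ε ≤ σ²ℓ* log N`, then `b_{γ*} ≤ σ²ℓ* log N`. -/
theorem statement_11 {M ℓ N : ℕ} (Xs : Matrix (Fin M) (Fin ℓ) ℝ)
    (hX : IsUnit (Xsᵀ * Xs).det)
    (μstar : Fin ℓ → ℝ) (hμ : (fun _ => (1 : ℝ)) ⬝ᵥ μstar = 1)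
    (ε : Fin M → ℝ) (y : Fin M → ℝ) (hy : y = Xs *ᵥ μstar + ε) (σ : ℝ) :
    let μhat := (Xsᵀ * Xs)⁻¹ *ᵥ (Xsᵀ *ᵥ y)
    let H := Xs * (Xsᵀ * Xs)⁻¹ * Xsᵀ
    let b := (1 - (fun _ => (1 : ℝ)) ⬝ᵥ μhat) ^ 2 /
      ((fun _ => (1 : ℝ)) ⬝ᵥ ((Xsᵀ * Xs)⁻¹ *ᵥ fun _ => (1 : ℝ)))
    b ≤ ε ⬝ᵥ (H *ᵥ ε) ∧
      (ε ⬝ᵥ (H *ᵥ ε) ≤ σ ^ 2 * ℓ * Real.log N → b ≤ σ ^ 2 * ℓ * Real.log N) := by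
  intro μhat H b
  set A := Xsᵀ * Xs with hA
  set ones : Fin ℓ → ℝ := fun _ => (1 : ℝ) with hones
  have hAinv : A⁻¹ * A = 1 := Matrix.nonsing_inv_mul A hX
  have hAinv' : A * A⁻¹ = 1 := Matrix.mul_nonsing_inv A hX
  have hAsym : Aᵀ = A := by rw [hA, transpose_mul, transpose_transpose]
  have hAinvsym : A⁻¹ᵀ = A⁻¹ := by rw [Matrix.transpose_nonsing_inv, hAsym]
  set v : Fin ℓ → ℝ := A⁻¹ *ᵥ ones with hv
  set w : Fin M → ℝ := Xs *ᵥ v with hw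
  set z : Fin M → ℝ := H *ᵥ ε with hz
  set s : ℝ := ones ⬝ᵥ v with hs
  -- H symmetric and idempotent facts
  have hHX : H * Xs = Xs := by
    rw [show H = Xs * A⁻¹ * Xsᵀ from rfl, Matrix.mul_assoc (Xs * A⁻¹) Xsᵀ Xs, ← hA,
      Matrix.mul_assoc Xs A⁻¹ A, hAinv, Matrix.mul_one]
  have hHsym : Hᵀ = H := by
    show (Xs * A⁻¹ * Xsᵀ)ᵀ = Xs * A⁻¹ * Xsᵀ
    rw [transpose_mul, transpose_mul, transpose_transpose, hAinvsym, Matrix.mul_assoc]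
  have hHH : H * H = H := by
    show (Xs * A⁻¹ * Xsᵀ) * H = Xs * A⁻¹ * Xsᵀ
    calc (Xs * A⁻¹ * Xsᵀ) * H = Xs * A⁻¹ * (Xsᵀ * H) := by rw [Matrix.mul_assoc]
    _ = Xs * A⁻¹ * Xsᵀ := by
        have : Xsᵀ * H = Xsᵀ := by
          have := congrArg Matrix.transpose hHX
          rwa [transpose_mul, hHsym] at this
        rw [this]
  -- fact 1: 1 - ones ⬝ μhat = -(w ⬝ᵥ ε)
  have key1 : 1 - ones ⬝ᵥ μhat = -(w ⬝ᵥ ε) := by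
    have hμhat : μhat = μstar + A⁻¹ *ᵥ (Xsᵀ *ᵥ ε) := by
      show A⁻¹ *ᵥ (Xsᵀ *ᵥ y) = _
      rw [hy, Matrix.mulVec_add, Matrix.mulVec_mulVec, ← hA, Matrix.mulVec_add,
        Matrix.mulVec_mulVec, hAinv, Matrix.one_mulVec]
    have h2 : ones ⬝ᵥ (A⁻¹ *ᵥ (Xsᵀ *ᵥ ε)) = w ⬝ᵥ ε := by
      rw [dot_shift, hAinvsym, ← hv, dot_shift, transpose_transpose, ← hw]
    rw [hμhat, dotProduct_add, hμ, h2]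
    ring
  -- fact 2: s = w ⬝ᵥ w
  have key2 : s = w ⬝ᵥ w := by
    rw [hw, dot_shift, Matrix.mulVec_mulVec, ← hA, hv, Matrix.mulVec_mulVec, hAinv',
      Matrix.one_mulVec, hs, hv, dotProduct_comm]
  -- fact 3: w ⬝ᵥ ε = w ⬝ᵥ z
  have key3 : w ⬝ᵥ ε = w ⬝ᵥ z := by
    rw [hz, dot_shift, hHsym]
    have : H *ᵥ w = w := by
      rw [hw, Matrix.mulVec_mulVec, hHX]
    rw [this]
  -- fact 4: ε ⬝ᵥ z = z ⬝ᵥ z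
  have key4 : ε ⬝ᵥ (H *ᵥ ε) = z ⬝ᵥ z := by
    rw [hz, dot_shift, hHsym]
    nth_rewrite 1 [show H *ᵥ ε = H *ᵥ (H *ᵥ ε) by rw [Matrix.mulVec_mulVec, hHH]]
    rw [dot_shift, hHsym, dotProduct_comm]
  have hznn : (0:ℝ) ≤ z ⬝ᵥ z := by
    simpa [dotProduct, sq] using Finset.sum_nonneg
      (fun i _ => mul_self_nonneg (z i))
  have hb : b = (w ⬝ᵥ ε) ^ 2 / s := by
    show (1 - ones ⬝ᵥ μhat) ^ 2 / s = _
    rw [key1]; ring_nf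
  have hbound : b ≤ ε ⬝ᵥ (H *ᵥ ε) := by
    rw [hb, key4, key3]
    have hsnn : (0:ℝ) ≤ s := by
      rw [key2]
      simpa [dotProduct, sq] using Finset.sum_nonneg fun i _ => mul_self_nonneg (w i)
    rcases eq_or_lt_of_le hsnn with h0 | hpos
    · rw [← h0]; simpa using hznn
    · rw [div_le_iff₀ hpos, key2]
      calc (w ⬝ᵥ z) ^ 2 ≤ (w ⬝ᵥ w) * (z ⬝ᵥ z) := cs_dot w z
      _ = (z ⬝ᵥ z) * (w ⬝ᵥ w) := by ring
  exact ⟨hbound, fun h => le_trans hbound h⟩
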